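/- Let G = ⟨V,E,T⟩ with V = V₁ ∪ V₂ be a finite turn-based reachability game, and construct the OVPP optional-grabbing pawn game G' = ⟨V',E',T ∪ {t}⟩ with V' = V ∪ {v' : v ∈ V} ∪ {s,t}, each vertex owned by a distinct pawn, and edges: (v',v) for every v ∈ V; (v,s) for every v ∈ V₁; (v,t) for every v ∈ V₂; and (u,v') for every edge (u,v) ∈ E; here t is a target and s is a sink with no path to a target. Let V'₁ = V₁ ∪ {v' : v ∈ V₂}. Then Player 1 wins G from a vertex v₀ ∈ V if and only if Player 1 wins the optional-grabbing game G' from configuration ⟨v₀, V'₁⟩. -/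

import Mathlib

open scoped Classical

/-- A strategy maps the history of previously visited positions and the current
position to a next position. -/
abbrev Strat (Pos : Type*) := List Pos → Pos → Pos

/-- A two-player turn-based game with positions `Pos`: `move` is the edge relation
(every position has a successor), `turn1 p` holds when Player 1 is the one to move at `p`,
and `target` is Player 1's reachability objective. -/
structure TB (Pos : Type*) where
  move : Pos → Pos → Prop
  total : ∀ p, ∃ q, move p q
  turn1 : Pos → Prop
  target : Pos → Prop

namespace TB

variable {Pos : Type*} (g : TB Pos)

/-- A strategy is legal if it always moves along edges of the game. -/
def Legal (f : Strat Pos) : Prop := ∀ h p, g.move p (f h p)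

/-- The history (first component) and current position (second component) of the play
after `n` steps, when the game starts at `p0` and the players use `f1` and `f2`. -/
noncomputable def histPlay (f1 f2 : Strat Pos) (p0 : Pos) : ℕ → List Pos × Pos
  | 0 => ([], p0)
  | n + 1 =>
      let hp : List Pos × Pos := histPlay f1 f2 p0 n
      (hp.1 ++ [hp.2], if g.turn1 hp.2 then f1 hp.1 hp.2 else f2 hp.1 hp.2)

/-- The position of the play after `n` steps. -/
noncomputable def play (f1 f2 : Strat Pos) (p0 : Pos) (n : ℕ) : Pos :=
  (g.histPlay f1 f2 p0 n).2

/-- Player 1 has a winning strategy from `p0`: some legal strategy such that against every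
legal Player 2 strategy the play visits the target. -/
def Win1 (p0 : Pos) : Prop :=
  ∃ f1, g.Legal f1 ∧ ∀ f2, g.Legal f2 → ∃ n, g.target (g.play f1 f2 p0 n)

/-- Player 2 has a winning strategy from `p0`: some legal strategy such that against every
legal Player 1 strategy the play never visits the target. -/
def Win2 (p0 : Pos) : Prop :=
  ∃ f2, g.Legal f2 ∧ ∀ f1, g.Legal f1 → ∀ n, ¬ g.target (g.play f1 f2 p0 n)

end TB

/-- An MVPP pawn game: a directed graph in which every vertex has a successor, each
vertex `w` is owned by the unique pawn `owner w`, and `target` is Player 1's objective. -/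
structure PawnGame (V : Type*) (ι : Type*) where
  E : V → V → Prop
  total : ∀ w, ∃ u, E w u
  owner : V → ι
  target : V → Prop

/-- Positions of the turn-based game induced by a pawn game under a grabbing mechanism:
`conf w P` is a configuration (token on `w`, Player 1 controls the pawns in `P`), and
`mid u w P` is the intermediate position after the token was moved from `w` to `u`. -/
inductive GPos (V : Type*) (ι : Type*) where
  | conf (w : V) (P : Set ι)
  | mid (u w : V) (P : Set ι)

/-- Moves of the optional-grabbing mechanism. -/
inductive OGMove {V ι : Type*} (G : PawnGame V ι) : GPos V ι → GPos V ι → Prop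
  | step {w u : V} {P : Set ι} : G.E w u → OGMove G (.conf w P) (.mid u w P)
  | noGrab {u w : V} {P : Set ι} : OGMove G (.mid u w P) (.conf u P)
  | grabBy2 {u w : V} {P : Set ι} {j : ι} :
      G.owner w ∈ P → j ∈ P → OGMove G (.mid u w P) (.conf u (P \ {j}))
  | grabBy1 {u w : V} {P : Set ι} {j : ι} :
      G.owner w ∉ P → j ∉ P → OGMove G (.mid u w P) (.conf u (insert j P))

/-- The turn-based game induced by an optional-grabbing pawn game. -/
def PawnGame.OG {V ι : Type*} (G : PawnGame V ι) : TB (GPos V ι) where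
  move := OGMove G
  total := by
    rintro (⟨w, P⟩ | ⟨u, w, P⟩)
    · obtain ⟨u, hu⟩ := G.total w
      exact ⟨.mid u w P, .step hu⟩
    · exact ⟨.conf u P, .noGrab⟩
  turn1 := fun p =>
    match p with
    | .conf w P => G.owner w ∈ P
    | .mid _ w P => G.owner w ∉ P
  target := fun p =>
    match p with
    | .conf w _ => G.target w
    | .mid _ _ _ => False

/-- Vertices of the OVPP optional-grabbing game built from a turn-based game:
the original vertices, a primed copy `prime v` of each vertex, a sink `s`
and a fresh target `t`. -/
inductive RVert (V : Type*) where
  | base (v : V)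
  | prime (v : V)
  | sink
  | targ

/-- Edges of the constructed game: `v' → v` for every `v`; `v → s` for `v ∈ V₁`;
`v → t` for `v ∈ V₂`; `u → v'` for every original edge `(u,v)`; `s` and `t` are
absorbing so that every vertex has a successor. -/
def redE {V : Type*} (g : TB V) : RVert V → RVert V → Prop := fun x y =>
  match x, y with
  | .prime v, .base w => w = v
  | .base v, .sink => g.turn1 v
  | .base v, .targ => ¬ g.turn1 v
  | .base v, .prime w => g.move v w
  | .sink, .sink => True
  | .targ, .targ => True
  | _, _ => False

/-- The OVPP optional-grabbing pawn game `G'` built from a turn-based game `g`: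
each vertex is owned by a distinct pawn (identified with the vertex itself), and
the target set is `T ∪ {t}`. -/
def redGame {V : Type*} (g : TB V) : PawnGame (RVert V) (RVert V) where
  E := redE g
  total := by
    rintro (v | v | _ | _)
    · by_cases h : g.turn1 v
      · exact ⟨.sink, h⟩
      · exact ⟨.targ, h⟩
    · exact ⟨.base v, rfl⟩
    · exact ⟨.sink, trivial⟩
    · exact ⟨.targ, trivial⟩
  owner := id
  target := fun x =>
    match x with
    | .base v => g.target v
    | .prime _ => False
    | .sink => False
    | .targ => True

/-- The initial set of pawns of Player 1: `V'₁ = V₁ ∪ {v' : v ∈ V₂}`. -/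
def redP1 {V : Type*} (g : TB V) : Set (RVert V) :=
  {x | match x with
       | .base v => g.turn1 v
       | .prime v => ¬ g.turn1 v
       | .sink => False
       | .targ => False}


section Aux

variable {V : Type*}

noncomputable def defSucc (g : TB V) (v : V) : V := (g.total v).choose

lemma defSucc_move (g : TB V) (v : V) : g.move v (defSucc g v) := (g.total v).choose_spec

abbrev GP (V : Type*) := GPos (RVert V) (RVert V)

def extractH : List (GP V) → List V :=
  List.filterMap fun p => match p with
    | .conf (.base v) _ => some v
    | _ => none

@[simp] lemma extractH_append (l m : List (GP V)) :
    extractH (l ++ m) = extractH l ++ extractH m := List.filterMap_append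

@[simp] lemma extractH_nil : extractH ([] : List (GP V)) = [] := rfl

def tok : GP V → RVert V
  | .conf w _ => w
  | .mid u _ _ => u

variable (g : TB V)

@[simp] lemma OG_move_eq : ((redGame g).OG).move = OGMove (redGame g) := rfl

@[simp] lemma OG_turn1_conf (w : RVert V) (P : Set (RVert V)) :
    ((redGame g).OG).turn1 (.conf w P) = (w ∈ P) := by rfl

@[simp] lemma OG_turn1_mid (u w : RVert V) (P : Set (RVert V)) :
    ((redGame g).OG).turn1 (.mid u w P) = (w ∉ P) := by rfl

@[simp] lemma OG_target_conf_base (v : V) (P : Set (RVert V)) :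
    ((redGame g).OG).target (.conf (.base v) P) = g.target v := rfl

@[simp] lemma OG_target_conf_prime (v : V) (P : Set (RVert V)) :
    ((redGame g).OG).target (.conf (.prime v) P) = False := rfl

@[simp] lemma OG_target_conf_targ (P : Set (RVert V)) :
    ((redGame g).OG).target (.conf .targ P) = True := rfl

@[simp] lemma OG_target_conf_sink (P : Set (RVert V)) :
    ((redGame g).OG).target (.conf .sink P) = False := rfl

@[simp] lemma OG_target_mid (u w : RVert V) (P : Set (RVert V)) :
    ((redGame g).OG).target (.mid u w P) = False := rfl

lemma TB.histPlay_succ' {Pos : Type*} (g : TB Pos) (f1 f2 : Strat Pos) (p0 : Pos) (n : ℕ) :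
    g.histPlay f1 f2 p0 (n+1) =
      ((g.histPlay f1 f2 p0 n).1 ++ [(g.histPlay f1 f2 p0 n).2],
       if g.turn1 (g.histPlay f1 f2 p0 n).2
       then f1 (g.histPlay f1 f2 p0 n).1 (g.histPlay f1 f2 p0 n).2
       else f2 (g.histPlay f1 f2 p0 n).1 (g.histPlay f1 f2 p0 n).2) := rfl

lemma TB.histPlay_len {Pos : Type*} (g : TB Pos) (f1 f2 : Strat Pos) (p0 : Pos) :
    ∀ n, (g.histPlay f1 f2 p0 n).1.length = n := by
  intro n; induction n with
  | zero => rfl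
  | succ n ih => rw [TB.histPlay_succ']; simp [ih]

lemma ogmove_conf_inv {ι W : Type*} {G : PawnGame W ι} {w : W} {P : Set ι} {q : GPos W ι}
    (h : OGMove G (.conf w P) q) : ∃ u, q = .mid u w P ∧ G.E w u := by
  cases h with | step h => exact ⟨_, rfl, h⟩

lemma ogmove_mid_inv {ι W : Type*} {G : PawnGame W ι} {u w : W} {P : Set ι} {q : GPos W ι}
    (h : OGMove G (.mid u w P) q) :
    (q = .conf u P) ∨ (G.owner w ∈ P ∧ ∃ j ∈ P, q = .conf u (P \ {j}))
      ∨ (G.owner w ∉ P ∧ ∃ j, j ∉ P ∧ q = .conf u (insert j P)) := by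
  cases h with
  | noGrab => exact Or.inl rfl
  | grabBy2 h1 h2 => exact Or.inr (Or.inl ⟨h1, _, h2, rfl⟩)
  | grabBy1 h1 h2 => exact Or.inr (Or.inr ⟨h1, _, h2, rfl⟩)

lemma redE_base_inv {v : V} {u : RVert V} (h : redE g (.base v) u) :
    (u = .sink ∧ g.turn1 v) ∨ (u = .targ ∧ ¬ g.turn1 v) ∨ ∃ w, u = .prime w ∧ g.move v w := by
  cases u with
  | base w => exact h.elim
  | prime w => exact Or.inr (Or.inr ⟨w, rfl, h⟩)
  | sink => exact Or.inl ⟨rfl, h⟩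
  | targ => exact Or.inr (Or.inl ⟨rfl, h⟩)

lemma redE_prime_inv {v : V} {u : RVert V} (h : redE g (.prime v) u) : u = .base v := by
  cases u with
  | base w => exact congrArg _ h
  | prime w => exact h.elim
  | sink => exact h.elim
  | targ => exact h.elim

lemma redE_sink_inv {u : RVert V} (h : redE g .sink u) : u = .sink := by
  cases u with
  | base w => exact h.elim
  | prime w => exact h.elim
  | sink => rfl
  | targ => exact h.elim

end Aux
section Strats

variable {V : Type*} (g : TB V)

/-- `u` is a base vertex of Player 1. -/
def goodBase : RVert V → Prop := fun u =>
  match u with | .base x => g.turn1 x | _ => False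

/-- `u` is a base vertex of Player 2. -/
def badBase : RVert V → Prop := fun u =>
  match u with | .base x => ¬ g.turn1 x | _ => False

@[simp] lemma goodBase_base (x : V) : goodBase g (.base x) = g.turn1 x := rfl
@[simp] lemma goodBase_prime (x : V) : goodBase g (.prime x) = False := rfl
@[simp] lemma goodBase_sink : goodBase g (.sink : RVert V) = False := rfl
@[simp] lemma goodBase_targ : goodBase g (.targ : RVert V) = False := rfl
@[simp] lemma badBase_base (x : V) : badBase g (.base x) = (¬ g.turn1 x) := rfl
@[simp] lemma badBase_prime (x : V) : badBase g (.prime x) = False := rfl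
@[simp] lemma badBase_sink : badBase g (.sink : RVert V) = False := rfl
@[simp] lemma badBase_targ : badBase g (.targ : RVert V) = False := rfl

/-- Player 1's strategy in the constructed game, simulating the TB strategy `f1`. -/
noncomputable def fwd1 (f1 : Strat V) : Strat (GP V) := fun h p =>
  match p with
  | .conf (.base v) P =>
      if g.turn1 v then .mid (.prime (f1 (extractH h) v)) (.base v) P
      else .mid .targ (.base v) P
  | .conf (.prime w) P => .mid (.base w) (.prime w) P
  | .conf .sink P => .mid .sink .sink P
  | .conf .targ P => .mid .targ .targ P
  | .mid u w P =>
      if w ∉ P ∧ u ∉ P ∧ goodBase g u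
      then .conf u (insert u P)
      else .conf u P

lemma fwd1_legal (f1 : Strat V) (hf1 : g.Legal f1) : ((redGame g).OG).Legal (fwd1 g f1) := by
  intro h p
  match p with
  | .conf (.base v) P =>
    show OGMove _ _ _
    rw [fwd1]
    split
    · exact .step (hf1 (extractH h) v)
    · exact .step ‹¬ g.turn1 v›
  | .conf (.prime w) P => exact .step rfl
  | .conf .sink P => exact .step trivial
  | .conf .targ P => exact .step trivial
  | .mid u w P =>
    show OGMove _ _ _
    rw [fwd1]
    by_cases hc : w ∉ P ∧ u ∉ P ∧ goodBase g u
    · rw [if_pos hc]; exact .grabBy1 hc.1 hc.2.1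
    · rw [if_neg hc]; exact .noGrab

/-- Player 2's canonical strategy in the constructed game, simulating the TB strategy `f2`. -/
noncomputable def bwd2 (f2 : Strat V) : Strat (GP V) := fun h p =>
  match p with
  | .conf (.base v) P => .mid (.prime (f2 (extractH h) v)) (.base v) P
  | .conf (.prime w) P => .mid (.base w) (.prime w) P
  | .conf .sink P => .mid .sink .sink P
  | .conf .targ P => .mid .targ .targ P
  | .mid u w P =>
      if w ∈ P ∧ u ∈ P ∧ badBase g u
      then .conf u (P \ {u})
      else .conf u P

lemma bwd2_legal (f2 : Strat V) (hf2 : g.Legal f2) : ((redGame g).OG).Legal (bwd2 g f2) := by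
  intro h p
  match p with
  | .conf (.base v) P => exact .step (hf2 (extractH h) v)
  | .conf (.prime w) P => exact .step rfl
  | .conf .sink P => exact .step trivial
  | .conf .targ P => exact .step trivial
  | .mid u w P =>
    show OGMove _ _ _
    rw [bwd2]
    by_cases hc : w ∈ P ∧ u ∈ P ∧ badBase g u
    · rw [if_pos hc]; exact .grabBy2 hc.1 hc.2.1
    · rw [if_neg hc]; exact .noGrab

/-- Player 2's canonical strategy with a fixed choice `v` at base configurations. -/
noncomputable def canon2v (v : V) : Strat (GP V) := fun _ p =>
  match p with
  | .conf (.base u) P => .mid (.prime v) (.base u) P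
  | .conf (.prime w) P => .mid (.base w) (.prime w) P
  | .conf .sink P => .mid .sink .sink P
  | .conf .targ P => .mid .targ .targ P
  | .mid u w P =>
      if w ∈ P ∧ u ∈ P ∧ badBase g u
      then .conf u (P \ {u})
      else .conf u P

noncomputable def stepOG (F1 : Strat (GP V)) (v : V) (s : List (GP V) × GP V) :
    List (GP V) × GP V :=
  (s.1 ++ [s.2], if ((redGame g).OG).turn1 s.2 then F1 s.1 s.2 else canon2v g v s.1 s.2)

noncomputable def advance (F1 : Strat (GP V)) (s : List (GP V) × GP V) (v : V) :
    List (GP V) × GP V :=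
  stepOG g F1 v (stepOG g F1 v (stepOG g F1 v (stepOG g F1 v s)))

/-- Reconstruction of the OG history-state pair from a TB history. -/
noncomputable def simS (F1 : Strat (GP V)) (h : List V) (v : V) : List (GP V) × GP V :=
  List.foldl (advance g F1) ([], .conf (.base ((h ++ [v]).headD v)) (redP1 g)) (h ++ [v]).tail

/-- The TB strategy for Player 1 extracted from an OG strategy `F1`. -/
noncomputable def bwd1 (F1 : Strat (GP V)) : Strat V := fun h v =>
  match F1 (simS g F1 h v).1 (simS g F1 h v).2 with
  | .mid (.prime w) _ _ => if g.move v w then w else defSucc g v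
  | _ => defSucc g v

lemma bwd1_legal (F1 : Strat (GP V)) : g.Legal (bwd1 g F1) := by
  intro h v
  rw [bwd1]
  split
  · split
    · assumption
    · exact defSucc_move g v
  · exact defSucc_move g v

def Kinv (P : Set (RVert V)) : Prop :=
  ∀ x ∈ P, (∃ u, x = RVert.base u ∧ g.turn1 u) ∨ ∃ u, x = RVert.prime u ∧ ¬ g.turn1 u

def Minv (P : Set (RVert V)) : Prop :=
  ∀ u : V, (g.turn1 u → RVert.base u ∈ P) ∧ (¬ g.turn1 u → RVert.prime u ∈ P)

lemma Kinv_init : Kinv g (redP1 g) := by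
  intro x hx
  cases x with
  | base u => exact Or.inl ⟨u, rfl, hx⟩
  | prime u => exact Or.inr ⟨u, rfl, hx⟩
  | sink => exact hx.elim
  | targ => exact hx.elim

lemma Minv_init : Minv g (redP1 g) := fun u => ⟨fun h => h, fun h => h⟩

lemma Kinv_mono {P Q : Set (RVert V)} (h : Q ⊆ P) (hK : Kinv g P) : Kinv g Q :=
  fun x hx => hK x (h hx)

lemma Minv_mono {P Q : Set (RVert V)} (h : P ⊆ Q) (hM : Minv g P) : Minv g Q :=
  fun u => ⟨fun ht => h ((hM u).1 ht), fun ht => h ((hM u).2 ht)⟩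

lemma tok_sink_move {p q : GP V} (h : OGMove (redGame g) p q) (hp : tok p = .sink) :
    tok q = .sink := by
  cases h with
  | @step w u P he =>
    have : w = RVert.sink := hp
    subst this
    exact redE_sink_inv g he
  | noGrab => exact hp
  | grabBy2 _ _ => exact hp
  | grabBy1 _ _ => exact hp

lemma not_target_of_tok_sink {p : GP V} (hp : tok p = .sink) : ¬ ((redGame g).OG).target p := by
  match p with
  | .conf w P =>
    have : w = RVert.sink := hp
    subst this
    simp
  | .mid u w P => simp

end Strats
section Evals

variable {V : Type*} (g : TB V) (f1 f2 : Strat V) (F1 : Strat (GP V))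
  (h : List (GP V)) (v : V) (w : V) (u : RVert V) (P : Set (RVert V))

lemma fwd1_conf_base : fwd1 g f1 h (.conf (.base v) P) =
    if g.turn1 v then .mid (.prime (f1 (extractH h) v)) (.base v) P
    else .mid .targ (.base v) P := rfl

lemma fwd1_conf_prime : fwd1 g f1 h (.conf (.prime w) P) = .mid (.base w) (.prime w) P := rfl

lemma fwd1_mid {x : RVert V} : fwd1 g f1 h (.mid u x P) =
    if x ∉ P ∧ u ∉ P ∧ goodBase g u then .conf u (insert u P) else .conf u P := rfl

lemma bwd2_conf_base : bwd2 g f2 h (.conf (.base v) P) =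
    .mid (.prime (f2 (extractH h) v)) (.base v) P := rfl

lemma bwd2_conf_prime : bwd2 g f2 h (.conf (.prime w) P) = .mid (.base w) (.prime w) P := rfl

lemma bwd2_mid {x : RVert V} : bwd2 g f2 h (.mid u x P) =
    if x ∈ P ∧ u ∈ P ∧ badBase g u then .conf u (P \ {u}) else .conf u P := rfl

lemma canon2v_conf_base (v' : V) : canon2v g v' h (.conf (.base v) P) =
    .mid (.prime v') (.base v) P := rfl

lemma bwd2_eq_canon2v_conf_prime (v' : V) :
    bwd2 g f2 h (.conf (.prime w) P) = canon2v g v' h (.conf (.prime w) P) := rfl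

lemma bwd2_eq_canon2v_mid (v' : V) {x : RVert V} :
    bwd2 g f2 h (.mid u x P) = canon2v g v' h (.mid u x P) := rfl

lemma stepOG_eval (s : List (GP V) × GP V) : stepOG g F1 v s =
    (s.1 ++ [s.2], if ((redGame g).OG).turn1 s.2 then F1 s.1 s.2 else canon2v g v s.1 s.2) := rfl

lemma advance_eval (s : List (GP V) × GP V) :
    advance g F1 s v = stepOG g F1 v (stepOG g F1 v (stepOG g F1 v (stepOG g F1 v s))) := rfl

end Evals
section Forward

@[simp] lemma extractH_cons_conf_base {V : Type*} (v : V) (P : Set (RVert V)) (l : List (GP V)) :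
    extractH (.conf (.base v) P :: l) = v :: extractH l := rfl

@[simp] lemma extractH_cons_conf_prime {V : Type*} (v : V) (P : Set (RVert V)) (l : List (GP V)) :
    extractH (.conf (.prime v) P :: l) = extractH l := rfl

@[simp] lemma extractH_cons_conf_sink {V : Type*} (P : Set (RVert V)) (l : List (GP V)) :
    extractH (.conf .sink P :: l) = extractH l := rfl

@[simp] lemma extractH_cons_conf_targ {V : Type*} (P : Set (RVert V)) (l : List (GP V)) :
    extractH (.conf .targ P :: l) = extractH l := rfl

@[simp] lemma extractH_cons_mid {V : Type*} (u w : RVert V) (P : Set (RVert V)) (l : List (GP V)) :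
    extractH (.mid u w P :: l) = extractH l := rfl

lemma forward_dir {V : Type*} (g : TB V) (v0 : V) (hW : g.Win1 v0) :
    (redGame g).OG.Win1 (.conf (.base v0) (redP1 g)) := by
  classical
  obtain ⟨f1, hf1, hwin⟩ := hW
  refine ⟨fwd1 g f1, fwd1_legal g f1 hf1, ?_⟩
  intro f2 hf2
  set start : GP V := .conf (.base v0) (redP1 g) with hstart
  set OGH : ℕ → List (GP V) × GP V :=
    fun n => ((redGame g).OG).histPlay (fwd1 g f1) f2 start n with hOGH
  set pick : GP V → V → V := fun q v =>
    match q with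
    | .mid (.prime w) _ _ => if g.move v w then w else defSucc g v
    | _ => defSucc g v with hpickdef
  have hpick : ∀ (q : GP V) (v : V), g.move v (pick q v) := by
    intro q v
    rcases q with ⟨w, P⟩ | ⟨u, w, P⟩
    · exact defSucc_move g v
    · rcases u with x | x | _ | _
      · exact defSucc_move g v
      · show g.move v (if g.move v x then x else defSucc g v)
        split
        · assumption
        · exact defSucc_move g v
      · exact defSucc_move g v
      · exact defSucc_move g v
  set f2' : Strat V := fun h v => pick (f2 (OGH (4 * h.length)).1 (OGH (4 * h.length)).2) v
    with hf2'def
  have hf2' : g.Legal f2' := fun h v => hpick _ v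
  set A : ℕ → List V × V := fun n => g.histPlay f1 f2' v0 n with hA
  have hstep : ∀ n, OGH (n+1) = ((OGH n).1 ++ [(OGH n).2],
      if ((redGame g).OG).turn1 (OGH n).2 then fwd1 g f1 (OGH n).1 (OGH n).2
      else f2 (OGH n).1 (OGH n).2) := fun n => rfl
  have hstepA : ∀ n, A (n+1) = ((A n).1 ++ [(A n).2],
      if g.turn1 (A n).2 then f1 (A n).1 (A n).2 else f2' (A n).1 (A n).2) := fun n => rfl
  have hlenA : ∀ n, (A n).1.length = n := fun n => TB.histPlay_len g f1 f2' v0 n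
  -- the last two steps of a round
  have tailStep : ∀ (t : ℕ) (w : V) (Q : Set (RVert V)),
      (OGH t).2 = .conf (.prime w) Q → Kinv g Q →
      ∃ P', (OGH (t+2)).2 = .conf (.base w) P' ∧ Kinv g P' ∧
        (RVert.base w ∈ P' ↔ g.turn1 w) ∧
        extractH (OGH (t+2)).1 = extractH (OGH t).1 := by
    intro t w Q hst hK
    have e1 := hstep t
    rw [hst] at e1
    simp only [OG_turn1_conf, OG_turn1_mid] at e1
    by_cases hpw : RVert.prime w ∈ Q
    · -- Player 1 moves from the primed vertex
      have hnt : ¬ g.turn1 w := by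
        rcases hK _ hpw with ⟨u, hu, _⟩ | ⟨u, hu, hnu⟩
        · exact absurd hu (by simp)
        · obtain rfl : w = u := by injection hu
          exact hnu
      rw [if_pos hpw, fwd1_conf_prime] at e1
      have e2 := hstep (t+1)
      rw [e1] at e2
      dsimp only at e2
      simp only [OG_turn1_conf, OG_turn1_mid] at e2
      rw [if_neg (not_not_intro hpw)] at e2
      have hmv := hf2 ((OGH t).1 ++ [GPos.conf (.prime w) Q]) (.mid (.base w) (.prime w) Q)
      rcases ogmove_mid_inv hmv with hq | ⟨_, j, hjQ, hq⟩ | ⟨hno, _⟩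
      · rw [hq] at e2
        refine ⟨Q, by rw [show t+2 = t+1+1 from rfl, e2], hK, ?_,
          by rw [show t+2 = t+1+1 from rfl, e2]; simp⟩
        constructor
        · intro hm
          rcases hK _ hm with ⟨u, hu, hnu⟩ | ⟨u, hu, _⟩
          · obtain rfl : w = u := by injection hu
            exact hnu
          · exact absurd hu (by simp)
        · intro ht; exact absurd ht hnt
      · rw [hq] at e2
        refine ⟨Q \ {j}, by rw [show t+2 = t+1+1 from rfl, e2], Kinv_mono g Set.diff_subset hK, ?_,
          by rw [show t+2 = t+1+1 from rfl, e2]; simp⟩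
        constructor
        · intro hm
          rcases hK _ hm.1 with ⟨u, hu, hnu⟩ | ⟨u, hu, _⟩
          · obtain rfl : w = u := by injection hu
            exact hnu
          · exact absurd hu (by simp)
        · intro ht; exact absurd ht hnt
      · exact absurd hpw hno
    · -- Player 2 moves from the primed vertex
      rw [if_neg hpw] at e1
      have hmv := hf2 (OGH t).1 (.conf (.prime w) Q)
      obtain ⟨u, hq, he⟩ := ogmove_conf_inv hmv
      obtain rfl : u = RVert.base w := redE_prime_inv g he
      rw [hq] at e1
      have e2 := hstep (t+1)
      rw [e1] at e2
      dsimp only at e2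
      simp only [OG_turn1_conf, OG_turn1_mid] at e2
      rw [if_pos hpw, fwd1_mid] at e2
      by_cases hc : RVert.base w ∉ Q ∧ g.turn1 w
      · rw [if_pos ⟨hpw, hc.1, hc.2⟩] at e2
        refine ⟨insert (RVert.base w) Q, by rw [show t+2 = t+1+1 from rfl, e2], ?_, ?_,
          by rw [show t+2 = t+1+1 from rfl, e2]; simp⟩
        · intro x hx
          rcases Set.mem_insert_iff.1 hx with rfl | hx'
          · exact Or.inl ⟨w, rfl, hc.2⟩
          · exact hK _ hx'
        · simp [hc.2]
      · rw [if_neg (fun hcc => hc ⟨hcc.2.1, hcc.2.2⟩)] at e2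
        refine ⟨Q, by rw [show t+2 = t+1+1 from rfl, e2], hK, ?_,
          by rw [show t+2 = t+1+1 from rfl, e2]; simp⟩
        constructor
        · intro hm
          rcases hK _ hm with ⟨u, hu, hnu⟩ | ⟨u, hu, _⟩
          · obtain rfl : w = u := by injection hu
            exact hnu
          · exact absurd hu (by simp)
        · intro ht
          by_contra hm
          exact hc ⟨hm, ht⟩
  -- the main invariant
  have main : ∀ n, (∃ m, ((redGame g).OG).target (OGH m).2) ∨
      ∃ P, (OGH (4*n)).2 = .conf (.base (A n).2) P ∧ Kinv g P ∧
        ((RVert.base (A n).2 ∈ P) ↔ g.turn1 (A n).2) ∧ extractH (OGH (4*n)).1 = (A n).1 := by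
    intro n
    induction n with
    | zero => exact Or.inr ⟨redP1 g, rfl, Kinv_init g, Iff.rfl, rfl⟩
    | succ n ih =>
      rcases ih with h | ⟨P, hst, hK, hiff, hex⟩
      · exact Or.inl h
      have hN4 : 4*(n+1) = (4*n+2)+2 := by ring
      have e1 := hstep (4*n)
      rw [hst] at e1
      simp only [OG_turn1_conf, OG_turn1_mid] at e1
      by_cases hturn : g.turn1 (A n).2
      · -- Player 1's turn in the TB game
        have hmem : RVert.base (A n).2 ∈ P := hiff.2 hturn
        rw [if_pos hmem, fwd1_conf_base, if_pos hturn, hex] at e1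
        have hAn1 : (A (n+1)).2 = f1 (A n).1 (A n).2 := by
          rw [hstepA n]; exact if_pos hturn
        have e2 := hstep (4*n+1)
        rw [e1] at e2
        dsimp only at e2
        simp only [OG_turn1_conf, OG_turn1_mid] at e2
        rw [if_neg (not_not_intro hmem)] at e2
        have hmv := hf2 ((OGH (4*n)).1 ++ [GPos.conf (.base (A n).2) P])
          (.mid (.prime (f1 (A n).1 (A n).2)) (.base (A n).2) P)
        rcases ogmove_mid_inv hmv with hq | ⟨_, j, hjP, hq⟩ | ⟨hno, _⟩
        · rw [hq] at e2
          obtain ⟨P', hst', hK', hiff', hex'⟩ :=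
            tailStep (4*n+2) (f1 (A n).1 (A n).2) P
              (by rw [show 4*n+2 = 4*n+1+1 from rfl, e2]) hK
          refine Or.inr ⟨P', ?_, hK', ?_, ?_⟩
          · rw [hN4, hst', hAn1]
          · rw [hAn1]; exact hiff'
          · rw [hN4, hex', show 4*n+2 = 4*n+1+1 from rfl, e2, hstepA n]
            simp [hex]
        · rw [hq] at e2
          obtain ⟨P', hst', hK', hiff', hex'⟩ :=
            tailStep (4*n+2) (f1 (A n).1 (A n).2) (P \ {j})
              (by rw [show 4*n+2 = 4*n+1+1 from rfl, e2]) (Kinv_mono g Set.diff_subset hK)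
          refine Or.inr ⟨P', ?_, hK', ?_, ?_⟩
          · rw [hN4, hst', hAn1]
          · rw [hAn1]; exact hiff'
          · rw [hN4, hex', show 4*n+2 = 4*n+1+1 from rfl, e2, hstepA n]
            simp [hex]
        · exact absurd hmem hno
      · -- Player 2's turn in the TB game
        have hmem : RVert.base (A n).2 ∉ P := fun h => hturn (hiff.1 h)
        rw [if_neg hmem] at e1
        have hmv := hf2 (OGH (4*n)).1 (.conf (.base (A n).2) P)
        obtain ⟨u, hq, he⟩ := ogmove_conf_inv hmv
        rcases redE_base_inv g he with ⟨rfl, ht⟩ | ⟨rfl, _⟩ | ⟨w', rfl, hmw⟩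
        · exact absurd ht hturn
        · -- Player 2 moves to the target
          rw [hq] at e1
          have e2 := hstep (4*n+1)
          rw [e1] at e2
          dsimp only at e2
          simp only [OG_turn1_conf, OG_turn1_mid] at e2
          rw [if_pos hmem, fwd1_mid, if_neg (fun hcc => hcc.2.2)] at e2
          refine Or.inl ⟨4*n+2, ?_⟩
          rw [show 4*n+2 = 4*n+1+1 from rfl, e2]
          trivial
        · -- Player 2 moves to a primed vertex
          rw [hq] at e1
          have hAn1 : (A (n+1)).2 = w' := by
            rw [hstepA n]
            dsimp only
            rw [if_neg hturn, hf2'def]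
            dsimp only
            rw [hlenA n, hst, hq]
            exact if_pos hmw
          have e2 := hstep (4*n+1)
          rw [e1] at e2
          dsimp only at e2
          simp only [OG_turn1_conf, OG_turn1_mid] at e2
          rw [if_pos hmem, fwd1_mid, if_neg (fun hcc => hcc.2.2)] at e2
          obtain ⟨P', hst', hK', hiff', hex'⟩ := tailStep (4*n+2) w' P
            (by rw [show 4*n+2 = 4*n+1+1 from rfl, e2]) hK
          refine Or.inr ⟨P', ?_, hK', ?_, ?_⟩
          · rw [hN4, hst', hAn1]
          · rw [hAn1]; exact hiff'
          · rw [hN4, hex', show 4*n+2 = 4*n+1+1 from rfl, e2, hstepA n]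
            simp [hex]
  obtain ⟨Nt, hNt⟩ := hwin f2' hf2'
  rcases main Nt with ⟨m, hm⟩ | ⟨P, hst, _, _, _⟩
  · exact ⟨m, hm⟩
  · refine ⟨4*Nt, ?_⟩
    show ((redGame g).OG).target (OGH (4*Nt)).2
    rw [hst]
    exact hNt

end Forward
section Backward

lemma head?_append_singleton {α : Type*} (l : List α) (a b : α) :
    ((l ++ [a]) ++ [b]).head? = (l ++ [a]).head? := by
  cases l <;> simp

lemma headD_eq_of_head? {α : Type*} {l : List α} {a : α} (h : l.head? = some a) (d : α) :
    l.headD d = a := by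
  cases l with
  | nil => simp at h
  | cons x xs =>
    simp only [List.head?_cons, Option.some.injEq] at h
    simp [h]

lemma tail_append_append {α : Type*} (l : List α) (a b : α) :
    ((l ++ [a]) ++ [b]).tail = (l ++ [a]).tail ++ [b] := by
  cases l <;> simp

lemma backward_dir {V : Type*} (g : TB V) (v0 : V)
    (hW : (redGame g).OG.Win1 (.conf (.base v0) (redP1 g))) : g.Win1 v0 := by
  classical
  obtain ⟨F1, hF1, hwin⟩ := hW
  refine ⟨bwd1 g F1, bwd1_legal g F1, ?_⟩
  intro f2 hf2
  set start : GP V := .conf (.base v0) (redP1 g) with hstart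
  set OGH : ℕ → List (GP V) × GP V :=
    fun n => ((redGame g).OG).histPlay F1 (bwd2 g f2) start n with hOGH
  set A : ℕ → List V × V := fun n => g.histPlay (bwd1 g F1) f2 v0 n with hA
  obtain ⟨m0, hm0⟩ := hwin (bwd2 g f2) (bwd2_legal g f2 hf2)
  have hstep : ∀ n, OGH (n+1) = ((OGH n).1 ++ [(OGH n).2],
      if ((redGame g).OG).turn1 (OGH n).2 then F1 (OGH n).1 (OGH n).2
      else bwd2 g f2 (OGH n).1 (OGH n).2) := fun n => rfl
  have hstepA : ∀ n, A (n+1) = ((A n).1 ++ [(A n).2],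
      if g.turn1 (A n).2 then bwd1 g F1 (A n).1 (A n).2 else f2 (A n).1 (A n).2) := fun n => rfl
  have hmovePlay : ∀ m, OGMove (redGame g) (OGH m).2 (OGH (m+1)).2 := by
    intro m
    rw [hstep m]
    dsimp only
    split
    · exact hF1 _ _
    · exact bwd2_legal g f2 hf2 _ _
  have toktrap : ∀ k, tok (OGH k).2 = .sink → ∀ m, k ≤ m → tok (OGH m).2 = .sink := by
    intro k hk m hm
    induction m, hm using Nat.le_induction with
    | base => exact hk
    | succ m hm ih => exact tok_sink_move g (hmovePlay m) ih
  have hhead : ∀ n, ((A n).1 ++ [(A n).2]).head? = some v0 := by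
    intro n
    induction n with
    | zero => rfl
    | succ n ih =>
      rw [hstepA n]
      dsimp only
      rw [head?_append_singleton]
      exact ih
  -- the last two steps of a round
  have tailStep2 : ∀ (t : ℕ) (w : V) (Q : Set (RVert V)) (v' : V),
      (OGH t).2 = .conf (.prime w) Q → Minv g Q →
      ∃ P', (OGH (t+2)).2 = .conf (.base w) P' ∧ Minv g P' ∧
        (¬ g.turn1 w → RVert.base w ∉ P') ∧
        extractH (OGH (t+2)).1 = extractH (OGH t).1 ∧
        (∃ (x y : RVert V) (R : Set (RVert V)), (OGH (t+1)).2 = GPos.mid x y R) ∧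
        stepOG g F1 v' (stepOG g F1 v' (OGH t)) = OGH (t+2) := by
    intro t w Q v' hst hM
    have e1 := hstep t
    rw [hst] at e1
    simp only [OG_turn1_conf, OG_turn1_mid] at e1
    by_cases hpw : RVert.prime w ∈ Q
    · rw [if_pos hpw] at e1
      have hmv := hF1 (OGH t).1 (.conf (.prime w) Q)
      obtain ⟨u, hq, he⟩ := ogmove_conf_inv hmv
      obtain rfl : u = RVert.base w := redE_prime_inv g he
      rw [hq] at e1
      have s1 : stepOG g F1 v' (OGH t) = OGH (t+1) := by
        rw [stepOG_eval, hst]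
        simp only [OG_turn1_conf]
        rw [if_pos hpw, hq, e1]
      have e2 := hstep (t+1)
      rw [e1] at e2
      dsimp only at e2
      simp only [OG_turn1_conf, OG_turn1_mid] at e2
      rw [if_neg (not_not_intro hpw), bwd2_mid] at e2
      have s2 : stepOG g F1 v' (OGH (t+1)) = OGH (t+1+1) := by
        rw [stepOG_eval, e1]
        dsimp only
        simp only [OG_turn1_conf, OG_turn1_mid]
        rw [if_neg (not_not_intro hpw), ← bwd2_eq_canon2v_mid g f2, bwd2_mid, e2]
      by_cases hc : RVert.base w ∈ Q ∧ ¬ g.turn1 w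
      · rw [if_pos ⟨hpw, hc.1, hc.2⟩] at e2
        refine ⟨Q \ {RVert.base w}, by rw [show t+2 = t+1+1 from rfl, e2], ?_, ?_,
          by rw [show t+2 = t+1+1 from rfl, e2]; simp, ⟨_, _, _, by rw [e1]⟩,
          by rw [s1, show t+2 = t+1+1 from rfl, s2]⟩
        · intro u
          refine ⟨fun ht => ⟨(hM u).1 ht, fun heq => ?_⟩, fun ht => ⟨(hM u).2 ht, by simp⟩⟩
          obtain rfl : u = w := by injection heq
          exact hc.2 ht
        · intro _ hmem
          exact hmem.2 rfl
      · rw [if_neg (fun hcc => hc ⟨hcc.2.1, hcc.2.2⟩)] at e2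
        refine ⟨Q, by rw [show t+2 = t+1+1 from rfl, e2], hM, ?_,
          by rw [show t+2 = t+1+1 from rfl, e2]; simp, ⟨_, _, _, by rw [e1]⟩,
          by rw [s1, show t+2 = t+1+1 from rfl, s2]⟩
        intro hnt hmem
        exact hc ⟨hmem, hnt⟩
    · have htw : g.turn1 w := by
        by_contra h
        exact hpw ((hM w).2 h)
      rw [if_neg hpw, bwd2_conf_prime] at e1
      have s1 : stepOG g F1 v' (OGH t) = OGH (t+1) := by
        rw [stepOG_eval, hst]
        simp only [OG_turn1_conf]
        rw [if_neg hpw, ← bwd2_eq_canon2v_conf_prime g f2, bwd2_conf_prime, e1]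
      have e2 := hstep (t+1)
      rw [e1] at e2
      dsimp only at e2
      simp only [OG_turn1_conf, OG_turn1_mid] at e2
      rw [if_pos hpw] at e2
      have s2 : stepOG g F1 v' (OGH (t+1)) = OGH (t+1+1) := by
        rw [stepOG_eval, e1]
        dsimp only
        simp only [OG_turn1_conf, OG_turn1_mid]
        rw [if_pos hpw, e2]
      have hmv := hF1 ((OGH t).1 ++ [GPos.conf (.prime w) Q]) (.mid (.base w) (.prime w) Q)
      rcases ogmove_mid_inv hmv with hq | ⟨hyes, _⟩ | ⟨_, j, hj, hq⟩
      · rw [hq] at e2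
        refine ⟨Q, by rw [show t+2 = t+1+1 from rfl, e2], hM, fun hnt => absurd htw hnt,
          by rw [show t+2 = t+1+1 from rfl, e2]; simp, ⟨_, _, _, by rw [e1]⟩,
          by rw [s1, show t+2 = t+1+1 from rfl, s2]⟩
      · exact absurd hyes hpw
      · rw [hq] at e2
        refine ⟨insert j Q, by rw [show t+2 = t+1+1 from rfl, e2],
          Minv_mono g (Set.subset_insert j Q) hM, fun hnt => absurd htw hnt,
          by rw [show t+2 = t+1+1 from rfl, e2]; simp, ⟨_, _, _, by rw [e1]⟩,
          by rw [s1, show t+2 = t+1+1 from rfl, s2]⟩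
  -- the main invariant
  have main : ∀ n, (∃ j, g.target (A j).2) ∨
      ∃ P, (OGH (4*n)).2 = .conf (.base (A n).2) P ∧ Minv g P ∧
        (¬ g.turn1 (A n).2 → RVert.base (A n).2 ∉ P) ∧
        extractH (OGH (4*n)).1 = (A n).1 ∧
        List.foldl (advance g F1) ([], .conf (.base v0) (redP1 g))
          (((A n).1 ++ [(A n).2]).tail) = OGH (4*n) ∧
        (∀ m, m < 4*n → ¬ ((redGame g).OG).target (OGH m).2) := by
    intro n
    induction n with
    | zero =>
      refine Or.inr ⟨redP1 g, rfl, Minv_init g, fun h ht => h ht, rfl, rfl, fun m hm => absurd hm (by omega)⟩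
    | succ n ih =>
      rcases ih with h | ⟨P, hst, hM, hnP, hex, hfold, hnoT⟩
      · exact Or.inl h
      by_cases htv : g.target (A n).2
      · exact Or.inl ⟨n, htv⟩
      have hN4 : 4*(n+1) = (4*n+2)+2 := by ring
      have e1 := hstep (4*n)
      rw [hst] at e1
      simp only [OG_turn1_conf, OG_turn1_mid] at e1
      by_cases hturn : g.turn1 (A n).2
      · -- Player 1's turn
        have hmem : RVert.base (A n).2 ∈ P := (hM (A n).2).1 hturn
        rw [if_pos hmem] at e1
        have hmv := hF1 (OGH (4*n)).1 (.conf (.base (A n).2) P)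
        obtain ⟨u, hq, he⟩ := ogmove_conf_inv hmv
        rcases redE_base_inv g he with ⟨rfl, _⟩ | ⟨rfl, hnt⟩ | ⟨w, rfl, hmw⟩
        · -- Player 1 moves to the sink: contradiction with the winning strategy
          exfalso
          have hsink : tok (OGH (4*n+1)).2 = RVert.sink := by
            rw [e1, hq]
            rfl
          rcases le_or_gt (4*n+1) m0 with hc | hc
          · exact not_target_of_tok_sink g (toktrap _ hsink m0 hc) hm0
          · rcases Nat.lt_or_ge m0 (4*n) with hc' | hc'
            · exact hnoT m0 hc' hm0
            · obtain rfl : m0 = 4*n := by omega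
              have : ((redGame g).OG).target (OGH (4*n)).2 := hm0
              rw [hst] at this
              exact htv this
        · exact absurd hturn hnt
        · -- Player 1 moves to a primed vertex
          rw [hq] at e1
          have hsim : simS g F1 (A n).1 (A n).2 = OGH (4*n) := by
            rw [simS, headD_eq_of_head? (hhead n)]
            exact hfold
          have hAn1 : (A (n+1)).2 = w := by
            rw [hstepA n]
            dsimp only
            rw [if_pos hturn]
            show bwd1 g F1 (A n).1 (A n).2 = w
            simp only [bwd1]
            rw [hsim, hst, hq]
            exact if_pos hmw
          have s1 : stepOG g F1 w (OGH (4*n)) = OGH (4*n+1) := by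
            rw [stepOG_eval, hst]
            simp only [OG_turn1_conf]
            rw [if_pos hmem, hq, e1]
          have e2 := hstep (4*n+1)
          rw [e1] at e2
          dsimp only at e2
          simp only [OG_turn1_conf, OG_turn1_mid] at e2
          rw [if_neg (not_not_intro hmem), bwd2_mid, if_neg (fun hcc => hcc.2.2)] at e2
          have s2 : stepOG g F1 w (OGH (4*n+1)) = OGH (4*n+1+1) := by
            rw [stepOG_eval, e1]
            dsimp only
            simp only [OG_turn1_conf, OG_turn1_mid]
            rw [if_neg (not_not_intro hmem), ← bwd2_eq_canon2v_mid g f2, bwd2_mid,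
              if_neg (fun hcc => hcc.2.2), e2]
          obtain ⟨P', hst', hM', hnP', hex', ⟨x, y, R, hmid⟩, hs34⟩ :=
            tailStep2 (4*n+2) w P w (by rw [show 4*n+2 = 4*n+1+1 from rfl, e2]) hM
          refine Or.inr ⟨P', ?_, hM', ?_, ?_, ?_, ?_⟩
          · rw [hN4, hst', hAn1]
          · rw [hAn1]; exact hnP'
          · rw [hN4, hex', show 4*n+2 = 4*n+1+1 from rfl, e2, hstepA n]
            simp [hex]
          · rw [hstepA n]
            dsimp only
            rw [tail_append_append, List.foldl_append, hfold]
            have : (if g.turn1 (A n).2 then bwd1 g F1 (A n).1 (A n).2 else f2 (A n).1 (A n).2) = w := by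
              rw [if_pos hturn]
              rw [show bwd1 g F1 (A n).1 (A n).2 = w from by
                simp only [bwd1]; rw [hsim, hst, hq]; exact if_pos hmw]
            rw [this]
            show advance g F1 (OGH (4*n)) w = OGH (4*(n+1))
            rw [advance_eval, s1, s2, hN4, show (4*n+2)+2 = 4*n+1+1+2 from rfl]
            rw [show 4*n+1+1 = 4*n+2 from rfl] at s2 ⊢
            rw [hs34]
          · intro m hm
            rcases Nat.lt_or_ge m (4*n) with hc | hc
            · exact hnoT m hc
            · have hm4 : m = 4*n ∨ m = 4*n+1 ∨ m = 4*n+2 ∨ m = 4*n+3 := by omega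
              rcases hm4 with rfl | rfl | rfl | rfl
              · rw [hst]
                simpa using htv
              · rw [e1]
                simp
              · rw [show 4*n+2 = 4*n+1+1 from rfl, e2]
                simp
              · rw [show 4*n+3 = (4*n+2)+1 from rfl, hmid]
                simp
      · -- Player 2's turn
        have hnm : RVert.base (A n).2 ∉ P := hnP hturn
        rw [if_neg hnm, bwd2_conf_base, hex] at e1
        set w := f2 (A n).1 (A n).2 with hwdef
        have hAn1 : (A (n+1)).2 = w := by
          rw [hstepA n]
          dsimp only
          rw [if_neg hturn]
        have s1 : stepOG g F1 w (OGH (4*n)) = OGH (4*n+1) := by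
          rw [stepOG_eval, hst]
          simp only [OG_turn1_conf]
          rw [if_neg hnm, canon2v_conf_base, e1]
        have e2 := hstep (4*n+1)
        rw [e1] at e2
        dsimp only at e2
        simp only [OG_turn1_conf, OG_turn1_mid] at e2
        rw [if_pos hnm] at e2
        have s2 : stepOG g F1 w (OGH (4*n+1)) = OGH (4*n+1+1) := by
          rw [stepOG_eval, e1]
          dsimp only
          simp only [OG_turn1_conf, OG_turn1_mid]
          rw [if_pos hnm, e2]
        have hmv := hF1 ((OGH (4*n)).1 ++ [GPos.conf (.base (A n).2) P])
          (.mid (.prime w) (.base (A n).2) P)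
        rcases ogmove_mid_inv hmv with hq | ⟨hyes, _⟩ | ⟨_, j, hj, hq⟩
        · rw [hq] at e2
          obtain ⟨P', hst', hM', hnP', hex', ⟨x, y, R, hmid⟩, hs34⟩ :=
            tailStep2 (4*n+2) w P w (by rw [show 4*n+2 = 4*n+1+1 from rfl, e2]) hM
          refine Or.inr ⟨P', ?_, hM', ?_, ?_, ?_, ?_⟩
          · rw [hN4, hst', hAn1]
          · rw [hAn1]; exact hnP'
          · rw [hN4, hex', show 4*n+2 = 4*n+1+1 from rfl, e2, hstepA n]
            simp [hex]
          · rw [hstepA n]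
            dsimp only
            rw [tail_append_append, List.foldl_append, hfold]
            rw [if_neg hturn]
            show advance g F1 (OGH (4*n)) w = OGH (4*(n+1))
            rw [advance_eval, s1, s2, hN4, show (4*n+2)+2 = 4*n+1+1+2 from rfl]
            rw [show 4*n+1+1 = 4*n+2 from rfl] at s2 ⊢
            rw [hs34]
          · intro m hm
            rcases Nat.lt_or_ge m (4*n) with hc | hc
            · exact hnoT m hc
            · have hm4 : m = 4*n ∨ m = 4*n+1 ∨ m = 4*n+2 ∨ m = 4*n+3 := by omega
              rcases hm4 with rfl | rfl | rfl | rfl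
              · rw [hst]
                simpa using htv
              · rw [e1]
                simp
              · rw [show 4*n+2 = 4*n+1+1 from rfl, e2]
                simp
              · rw [show 4*n+3 = (4*n+2)+1 from rfl, hmid]
                simp
        · exact absurd hyes hnm
        · rw [hq] at e2
          obtain ⟨P', hst', hM', hnP', hex', ⟨x, y, R, hmid⟩, hs34⟩ :=
            tailStep2 (4*n+2) w (insert j P) w (by rw [show 4*n+2 = 4*n+1+1 from rfl, e2])
              (Minv_mono g (Set.subset_insert j P) hM)
          refine Or.inr ⟨P', ?_, hM', ?_, ?_, ?_, ?_⟩
          · rw [hN4, hst', hAn1]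
          · rw [hAn1]; exact hnP'
          · rw [hN4, hex', show 4*n+2 = 4*n+1+1 from rfl, e2, hstepA n]
            simp [hex]
          · rw [hstepA n]
            dsimp only
            rw [tail_append_append, List.foldl_append, hfold]
            rw [if_neg hturn]
            show advance g F1 (OGH (4*n)) w = OGH (4*(n+1))
            rw [advance_eval, s1, s2, hN4, show (4*n+2)+2 = 4*n+1+1+2 from rfl]
            rw [show 4*n+1+1 = 4*n+2 from rfl] at s2 ⊢
            rw [hs34]
          · intro m hm
            rcases Nat.lt_or_ge m (4*n) with hc | hc
            · exact hnoT m hc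
            · have hm4 : m = 4*n ∨ m = 4*n+1 ∨ m = 4*n+2 ∨ m = 4*n+3 := by omega
              rcases hm4 with rfl | rfl | rfl | rfl
              · rw [hst]
                simpa using htv
              · rw [e1]
                simp
              · rw [show 4*n+2 = 4*n+1+1 from rfl, e2]
                simp
              · rw [show 4*n+3 = (4*n+2)+1 from rfl, hmid]
                simp
  rcases main (m0+1) with ⟨j, hj⟩ | ⟨P, _, _, _, _, _, hnoT⟩
  · exact ⟨j, hj⟩
  · exact absurd hm0 (hnoT m0 (by omega))

end Backward
/-- **Lemma 4.2**: Player 1 wins the turn-based game `g` from a vertex `v₀` if and only if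
Player 1 wins the constructed OVPP optional-grabbing pawn game from the configuration
`⟨v₀, V'₁⟩`. -/
theorem turn_based_to_optional_grabbing {V : Type*} (g : TB V) (v0 : V) :
    g.Win1 v0 ↔ (redGame g).OG.Win1 (.conf (.base v0) (redP1 g)) :=
  ⟨forward_dir g v0, backward_dir g v0⟩
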